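/- Let H be a complex Hilbert space and let Y be a contraction on H with ker(I − Y) = {0}. Then the set {(I − Y*)x : x ∈ H, (I − Y)x ∈ ran D_{Y*}} equals ran(I − Y*) ∩ ran D_Y. (Equivalently, the injective map (I − Y*)(I − Y)^{-1} carries ran(I − Y) ∩ ran D_{Y*} onto ran(I − Y*) ∩ ran D_Y.) -/

import Mathlib

set_option synthInstance.maxHeartbeats 1000000
set_option maxHeartbeats 1000000

open ContinuousLinearMap

open Polynomial in
/-- Intertwining for the continuous functional calculus: if `Y * a = b * Y` for
selfadjoint `a, b` with spectra in `[0,1]`, then `Y * f(a) = f(b) * Y` for every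
continuous `f`. -/
lemma intertwine_cfc {A : Type*} [CStarAlgebra A] {Y a b : A}
    (ha : IsSelfAdjoint a) (hb : IsSelfAdjoint b)
    (hsa : spectrum ℝ a ⊆ Set.Icc (0:ℝ) 1) (hsb : spectrum ℝ b ⊆ Set.Icc (0:ℝ) 1)
    (h : Y * a = b * Y) (f : C(ℝ, ℝ)) :
    Y * cfc (⇑f) a = cfc (⇑f) b * Y := by
  set s : Set ℝ := Set.Icc (0:ℝ) 1 with hs
  have key : ∀ g : C(s, ℝ),
      Y * cfcHomSuperset ha hsa g = cfcHomSuperset hb hsb g * Y := by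
    let S : Subalgebra ℝ C(s, ℝ) :=
    { carrier := {g | Y * cfcHomSuperset ha hsa g = cfcHomSuperset hb hsb g * Y}
      mul_mem' := by
        intro g₁ g₂ h1 h2
        simp only [Set.mem_setOf_eq, map_mul] at h1 h2 ⊢
        rw [← mul_assoc, h1, mul_assoc, h2, ← mul_assoc]
      add_mem' := by
        intro g₁ g₂ h1 h2
        simp only [Set.mem_setOf_eq, map_add] at h1 h2 ⊢
        rw [mul_add, add_mul, h1, h2]
      one_mem' := by
        simp only [Set.mem_setOf_eq, map_one, mul_one, one_mul]
      zero_mem' := by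
        simp only [Set.mem_setOf_eq, map_zero, mul_zero, zero_mul]
      algebraMap_mem' := by
        intro r
        simp only [Set.mem_setOf_eq, AlgHomClass.commutes]
        exact (Algebra.commutes r Y).symm }
    have hXmem : (toContinuousMapOnAlgHom s X : C(s, ℝ)) ∈ S := by
      have hX : (toContinuousMapOnAlgHom s X : C(s, ℝ))
          = ContinuousMap.restrict s (ContinuousMap.id ℝ) := by
        ext x
        simp [toContinuousMapOnAlgHom, toContinuousMapOn, Polynomial.toContinuousMap]
      show Y * cfcHomSuperset ha hsa _ = cfcHomSuperset hb hsb _ * Y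
      rw [hX, cfcHomSuperset_id ha hsa, cfcHomSuperset_id hb hsb, h]
    have hpoly : polynomialFunctions s ≤ S := by
      rw [polynomialFunctions.eq_adjoin_X]
      exact Algebra.adjoin_le (Set.singleton_subset_iff.mpr hXmem)
    have hclosed : IsClosed
        {g : C(s, ℝ) | Y * cfcHomSuperset ha hsa g = cfcHomSuperset hb hsb g * Y} :=
      isClosed_eq (continuous_const.mul (cfcHomSuperset_continuous ha hsa))
        ((cfcHomSuperset_continuous hb hsb).mul continuous_const)
    intro g
    have hg : g ∈ closure (polynomialFunctions s : Set C(s, ℝ)) := by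
      have h1 : (polynomialFunctions s).topologicalClosure = ⊤ :=
        polynomialFunctions_closure_eq_top 0 1
      have h2 : ((polynomialFunctions s).topologicalClosure : Set C(s, ℝ)) = Set.univ := by
        rw [h1]; rfl
      rw [Subalgebra.topologicalClosure_coe] at h2
      exact h2 ▸ Set.mem_univ g
    exact hclosed.closure_subset_iff.mpr (fun g' hg' => hpoly hg') hg
  have hfa : cfcHomSuperset ha hsa (f.restrict s) = cfc (⇑f) a := by
    rw [cfc_apply (⇑f) a ha (Continuous.continuousOn f.continuous)]
    simp only [cfcHomSuperset, StarAlgHom.comp_apply, ContinuousMap.compStarAlgHom'_apply]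
    exact congrArg _ (ContinuousMap.ext fun x => rfl)
  have hfb : cfcHomSuperset hb hsb (f.restrict s) = cfc (⇑f) b := by
    rw [cfc_apply (⇑f) b hb (Continuous.continuousOn f.continuous)]
    simp only [cfcHomSuperset, StarAlgHom.comp_apply, ContinuousMap.compStarAlgHom'_apply]
    exact congrArg _ (ContinuousMap.ext fun x => rfl)
  rw [← hfa, ← hfb]
  exact key (f.restrict s)

/-- For a nonneg element, `CFC.sqrt` agrees with the real functional calculus of
`Real.sqrt`. -/
lemma CFC.sqrt_eq_cfc_real_sqrt {A : Type*} [CStarAlgebra A] [PartialOrder A]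
    [StarOrderedRing A] {a : A} (ha : 0 ≤ a) :
    CFC.sqrt a = cfc Real.sqrt a := by
  refine CFC.sqrt_unique ?_ ?_
  · rw [← cfc_mul Real.sqrt Real.sqrt a]
    have h1 : ∀ x ∈ spectrum ℝ a, Real.sqrt x * Real.sqrt x = x := fun x hx =>
      Real.mul_self_sqrt (spectrum_nonneg_of_nonneg ha hx)
    rw [cfc_congr h1]
    exact cfc_id ℝ a ha.isSelfAdjoint
  · exact cfc_nonneg (fun x _ => Real.sqrt_nonneg x)

/-- For a contraction `Y` on a complex Hilbert space with `ker (I - Y) = {0}`,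
the set `{(I - Y*)x : x ∈ H, (I - Y)x ∈ ran D_{Y*}}` equals `ran (I - Y*) ∩ ran D_Y`,
where `D_Y = (I - Y*Y)^{1/2}` and `D_{Y*} = (I - YY*)^{1/2}`. -/
theorem image_of_preimage_defect_eq_inter
    {H : Type*} [NormedAddCommGroup H] [InnerProductSpace ℂ H] [CompleteSpace H]
    (Y : H →L[ℂ] H) (hY : ‖Y‖ ≤ 1) (hker : LinearMap.ker ((1 - Y : H →L[ℂ] H) : H →ₗ[ℂ] H) = ⊥) :
    {u : H | ∃ x : H, (1 - Y) x ∈ Set.range ⇑(CFC.sqrt (1 - Y * adjoint Y)) ∧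
        u = (1 - adjoint Y) x} =
      Set.range ⇑(1 - adjoint Y) ∩ Set.range ⇑(CFC.sqrt (1 - adjoint Y * Y)) := by
  have hYs : ‖adjoint Y‖ ≤ 1 := by
    rw [← star_eq_adjoint, norm_star]; exact hY
  set a : H →L[ℂ] H := 1 - adjoint Y * Y with ha_def
  set b : H →L[ℂ] H := 1 - Y * adjoint Y with hb_def
  have hsnn : 0 ≤ adjoint Y * Y := by
    rw [← star_eq_adjoint]; exact star_mul_self_nonneg Y
  have hsnn' : 0 ≤ Y * adjoint Y := by
    rw [← star_eq_adjoint]; exact mul_star_self_nonneg Y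
  have hle1 : adjoint Y * Y ≤ 1 := by
    rw [← CStarAlgebra.norm_le_one_iff_of_nonneg _ hsnn]
    calc ‖adjoint Y * Y‖ ≤ ‖adjoint Y‖ * ‖Y‖ := norm_mul_le _ _
      _ ≤ 1 := by nlinarith [norm_nonneg Y, norm_nonneg (adjoint Y)]
  have hle1' : Y * adjoint Y ≤ 1 := by
    rw [← CStarAlgebra.norm_le_one_iff_of_nonneg _ hsnn']
    calc ‖Y * adjoint Y‖ ≤ ‖Y‖ * ‖adjoint Y‖ := norm_mul_le _ _
      _ ≤ 1 := by nlinarith [norm_nonneg Y, norm_nonneg (adjoint Y)]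
  have ha0 : 0 ≤ a := sub_nonneg.mpr hle1
  have hb0 : 0 ≤ b := sub_nonneg.mpr hle1'
  have ha1 : a ≤ 1 := by
    rw [ha_def]; exact sub_le_self 1 hsnn
  have hb1 : b ≤ 1 := by
    rw [hb_def]; exact sub_le_self 1 hsnn'
  have hsa : spectrum ℝ a ⊆ Set.Icc (0:ℝ) 1 := fun x hx =>
    ⟨spectrum_nonneg_of_nonneg ha0 hx,
      (CFC.le_one_iff (R := ℝ) a ha0.isSelfAdjoint).mp ha1 x hx⟩
  have hsb : spectrum ℝ b ⊆ Set.Icc (0:ℝ) 1 := fun x hx =>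
    ⟨spectrum_nonneg_of_nonneg hb0 hx,
      (CFC.le_one_iff (R := ℝ) b hb0.isSelfAdjoint).mp hb1 x hx⟩
  have hcomm : Y * a = b * Y := by
    rw [ha_def, hb_def]; noncomm_ring
  have hint := intertwine_cfc ha0.isSelfAdjoint hb0.isSelfAdjoint hsa hsb hcomm
    ⟨Real.sqrt, Real.continuous_sqrt⟩
  set D := CFC.sqrt a with hD_def
  set D' := CFC.sqrt b with hD'_def
  have hDa : D = cfc Real.sqrt a := CFC.sqrt_eq_cfc_real_sqrt ha0
  have hD'b : D' = cfc Real.sqrt b := CFC.sqrt_eq_cfc_real_sqrt hb0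
  have hYD : Y * D = D' * Y := by
    rw [hDa, hD'b]; exact hint
  have hDsa : IsSelfAdjoint D := IsSelfAdjoint.of_nonneg (CFC.sqrt_nonneg a)
  have hD'sa : IsSelfAdjoint D' := IsSelfAdjoint.of_nonneg (CFC.sqrt_nonneg b)
  have hYD' : adjoint Y * D' = D * adjoint Y := by
    have h1 := congrArg star hYD
    rw [star_mul, star_mul, hDsa.star_eq, hD'sa.star_eq, star_eq_adjoint] at h1
    exact h1.symm
  have hDD : D * D = a := CFC.sqrt_mul_sqrt_self a ha0
  have hD'D' : D' * D' = b := CFC.sqrt_mul_sqrt_self b hb0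
  ext u
  constructor
  · rintro ⟨x, ⟨w, hw⟩, rfl⟩
    refine ⟨⟨x, rfl⟩, ⟨D x - adjoint Y w, ?_⟩⟩
    have hop : a - adjoint Y * (1 - Y) = 1 - adjoint Y := by
      rw [ha_def]; noncomm_ring
    calc D (D x - adjoint Y w)
        = (D * D) x - (D * adjoint Y) w := by
          rw [map_sub]; simp only [ContinuousLinearMap.mul_apply]
      _ = a x - (adjoint Y * D') w := by rw [hDD, ← hYD']
      _ = a x - adjoint Y ((1 - Y) x) := by
          rw [ContinuousLinearMap.mul_apply, hw]
      _ = (a - adjoint Y * (1 - Y)) x := by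
          simp only [ContinuousLinearMap.sub_apply, ContinuousLinearMap.mul_apply]
      _ = (1 - adjoint Y) x := by rw [hop]
  · rintro ⟨⟨x, hx⟩, ⟨v, hv⟩⟩
    refine ⟨x, ⟨D' x - Y v, ?_⟩, hx.symm⟩
    have hop : b - Y * (1 - adjoint Y) = 1 - Y := by
      rw [hb_def]; noncomm_ring
    calc D' (D' x - Y v)
        = (D' * D') x - (D' * Y) v := by
          rw [map_sub]; simp only [ContinuousLinearMap.mul_apply]
      _ = b x - (Y * D) v := by rw [hD'D', ← hYD]
      _ = b x - Y ((1 - adjoint Y) x) := by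
          rw [ContinuousLinearMap.mul_apply, hv, hx]
      _ = (b - Y * (1 - adjoint Y)) x := by
          simp only [ContinuousLinearMap.sub_apply, ContinuousLinearMap.mul_apply]
      _ = (1 - Y) x := by rw [hop]
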